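/- If A is a uniformly random word of length m over an alphabet of size k and B is an independent uniformly random word of length b over the same alphabet, then Pr[A is a subsequence of B] ≤ exp((b - (7/8)·k·m)/(4k)). -/

import Mathlib

open Classical

/-- Probability of an event under the uniform distribution on a finite type. -/
noncomputable def unifPr {α : Type*} [Fintype α] (P : α → Prop) : ℝ :=
  ((Finset.univ.filter P).card : ℝ) / (Fintype.card α : ℝ)

/-- Number of pairs (A, B) ∈ [k]^m × [k]^b with A a subsequence of B. -/
noncomputable def subseqCnt (k m b : ℕ) : ℕ :=
  (Finset.univ.filter fun p : (Fin m → Fin k) × (Fin b → Fin k) =>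
    (List.ofFn p.1).Sublist (List.ofFn p.2)).card

lemma subseqCnt_zero_left (k b : ℕ) : subseqCnt k 0 b = k ^ b := by
  unfold subseqCnt
  rw [Finset.filter_true_of_mem (fun p _ => by simp)]
  simp [Finset.card_univ]

lemma subseqCnt_zero_right (k m : ℕ) : subseqCnt k (m + 1) 0 = 0 := by
  unfold subseqCnt
  rw [Finset.filter_false_of_mem, Finset.card_empty]
  intro p _
  simp only [List.ofFn_zero (f := p.2)]
  intro h
  have := h.length_le
  simp at this

private lemma cons_sum (k : ℕ) (a : Fin k) (l₁ l₂ : List (Fin k)) :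
    (∑ c : Fin k, if (a :: l₁).Sublist (c :: l₂) then 1 else 0) =
      (if l₁.Sublist l₂ then 1 else 0) +
        (k - 1) * (if (a :: l₁).Sublist l₂ then 1 else 0) := by
  rw [← Finset.add_sum_erase Finset.univ _ (Finset.mem_univ a)]
  have h1 : (if (a :: l₁).Sublist (a :: l₂) then 1 else 0) =
      (if l₁.Sublist l₂ then 1 else 0) := by
    simp [List.cons_sublist_cons]
  have h2 : ∀ c ∈ Finset.univ.erase a,
      (if (a :: l₁).Sublist (c :: l₂) then 1 else 0) =
        (if (a :: l₁).Sublist l₂ then 1 else 0) := by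
    intro c hc
    have hac : a ≠ c := (Finset.ne_of_mem_erase hc).symm
    congr 1
    rw [List.cons_sublist_cons']
    simp [hac]
  rw [Finset.sum_congr rfl h2, Finset.sum_const, Finset.card_erase_of_mem (Finset.mem_univ a)]
  rw [h1, Finset.card_univ]
  simp [mul_comm]

lemma subseqCnt_rec (k m b : ℕ) :
    subseqCnt k (m + 1) (b + 1) = k * subseqCnt k m b + (k - 1) * subseqCnt k (m + 1) b := by
  have hcard : ∀ (m' b' : ℕ), subseqCnt k m' b' =
      ∑ A : Fin m' → Fin k, ∑ B : Fin b' → Fin k,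
        if (List.ofFn A).Sublist (List.ofFn B) then 1 else 0 := by
    intro m' b'
    rw [subseqCnt, Finset.card_filter, Fintype.sum_prod_type]
  have eA : ∀ m' b' : ℕ, ∀ (g : (Fin (m'+1) → Fin k) → (Fin b' → Fin k) → ℕ),
      (∑ A : Fin (m'+1) → Fin k, ∑ B : Fin b' → Fin k, g A B) =
        ∑ a : Fin k, ∑ A' : Fin m' → Fin k, ∑ B : Fin b' → Fin k,
          g (Fin.cons a A') B := by
    intro m' b' g
    rw [← Equiv.sum_comp (Fin.consEquiv fun _ => Fin k)
      (fun A => ∑ B : Fin b' → Fin k, g A B), Fintype.sum_prod_type]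
    rfl
  -- expand B in the LHS
  have step1 : ∀ (a : Fin k) (A' : Fin m → Fin k),
      (∑ B : Fin (b+1) → Fin k,
        if (List.ofFn (Fin.cons a A')).Sublist (List.ofFn B) then 1 else 0) =
      (∑ B' : Fin b → Fin k, if (List.ofFn A').Sublist (List.ofFn B') then 1 else 0)
        + (k - 1) * ∑ B' : Fin b → Fin k,
            if (List.ofFn (Fin.cons a A')).Sublist (List.ofFn B') then 1 else 0 := by
    intro a A'
    rw [← Equiv.sum_comp (Fin.consEquiv fun _ => Fin k)
      (fun B => if (List.ofFn (Fin.cons a A')).Sublist (List.ofFn B) then 1 else 0),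
      Fintype.sum_prod_type]
    have : ∀ c : Fin k, ∀ B' : Fin b → Fin k,
        ((Fin.consEquiv fun _ : Fin (b+1) => Fin k) (c, B')) = Fin.cons c B' := fun _ _ => rfl
    simp only [this]
    calc (∑ c : Fin k, ∑ B' : Fin b → Fin k,
            if (List.ofFn (Fin.cons a A')).Sublist (List.ofFn (Fin.cons c B')) then 1 else 0)
        = ∑ B' : Fin b → Fin k, ∑ c : Fin k,
            if (a :: List.ofFn A').Sublist (c :: List.ofFn B') then 1 else 0 := by
          rw [Finset.sum_comm]
          simp [List.ofFn_cons]
      _ = ∑ B' : Fin b → Fin k,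
            ((if (List.ofFn A').Sublist (List.ofFn B') then 1 else 0) +
              (k - 1) * (if (a :: List.ofFn A').Sublist (List.ofFn B') then 1 else 0)) := by
          refine Finset.sum_congr rfl fun B' _ => ?_
          exact cons_sum k a (List.ofFn A') (List.ofFn B')
      _ = _ := by
          rw [Finset.sum_add_distrib, ← Finset.mul_sum]
          simp [List.ofFn_cons]
  calc subseqCnt k (m + 1) (b + 1)
      = ∑ a : Fin k, ∑ A' : Fin m → Fin k, ∑ B : Fin (b+1) → Fin k,
          if (List.ofFn (Fin.cons a A')).Sublist (List.ofFn B) then 1 else 0 := by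
        rw [hcard]; exact eA m (b+1) _
    _ = ∑ a : Fin k, ∑ A' : Fin m → Fin k,
          ((∑ B' : Fin b → Fin k, if (List.ofFn A').Sublist (List.ofFn B') then 1 else 0)
            + (k - 1) * ∑ B' : Fin b → Fin k,
                if (List.ofFn (Fin.cons a A')).Sublist (List.ofFn B') then 1 else 0) := by
        exact Finset.sum_congr rfl fun a _ => Finset.sum_congr rfl fun A' _ => step1 a A'
    _ = k * subseqCnt k m b + (k - 1) * subseqCnt k (m + 1) b := by
        simp only [Finset.sum_add_distrib, ← Finset.mul_sum]
        congr 1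
        · rw [Finset.sum_const, Finset.card_univ, hcard m b]
          simp [mul_comm]
        · rw [hcard (m+1) b, eA m b]

lemma exp_7_32_le : Real.exp (7 / 32) ≤ 5 / 4 := by
  have h32 : (Real.exp (7 / 32)) ^ (32 : ℕ) = Real.exp 7 := by
    rw [← Real.exp_nat_mul]
    norm_num
  refine le_of_pow_le_pow_left₀ (n := 32) (by norm_num) (by norm_num) ?_
  rw [h32]
  have h7 : Real.exp 7 = (Real.exp 1) ^ (7 : ℕ) := by
    rw [← Real.exp_nat_mul]; norm_num
  rw [h7]
  calc (Real.exp 1) ^ (7 : ℕ) ≤ (2.7182818286 : ℝ) ^ (7 : ℕ) :=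
        pow_le_pow_left₀ (Real.exp_pos 1).le Real.exp_one_lt_d9.le 7
    _ ≤ ((5 : ℝ) / 4) ^ (32 : ℕ) := by norm_num

lemma key_ineq (k : ℕ) (hk : 1 ≤ k) :
    Real.exp (7 / 32) + ((k : ℝ) - 1) ≤ (k : ℝ) * Real.exp (1 / (4 * k)) := by
  have hk0 : (0 : ℝ) < k := by exact_mod_cast hk
  have h1 : (1 : ℝ) + 1 / (4 * k) ≤ Real.exp (1 / (4 * k)) := by
    have := Real.add_one_le_exp (1 / (4 * (k : ℝ)))
    linarith
  have h2 : (k : ℝ) * (1 + 1 / (4 * k)) = k + 1 / 4 := by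
    field_simp
  nlinarith [exp_7_32_le, mul_le_mul_of_nonneg_left h1 hk0.le]

lemma subseqCnt_le (k : ℕ) (hk : 1 ≤ k) :
    ∀ b m, (subseqCnt k m b : ℝ) ≤
      (k : ℝ) ^ (m + b) * Real.exp ((b : ℝ) / (4 * k) - 7 * m / 32) := by
  have hk0 : (0 : ℝ) < k := by exact_mod_cast hk
  intro b
  induction b with
  | zero =>
    intro m
    match m with
    | 0 => simp [subseqCnt_zero_left]
    | m + 1 =>
      rw [subseqCnt_zero_right, Nat.cast_zero]
      positivity
  | succ b ih =>
    intro m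
    match m with
    | 0 =>
      rw [subseqCnt_zero_left]
      have h1 : (1 : ℝ) ≤ Real.exp (((b : ℝ) + 1) / (4 * k) - 7 * 0 / 32) := by
        have harg : ((b : ℝ) + 1) / (4 * k) - 7 * 0 / 32 = ((b : ℝ) + 1) / (4 * k) := by ring
        rw [harg]
        calc (1 : ℝ) = Real.exp 0 := Real.exp_zero.symm
          _ ≤ _ := Real.exp_le_exp.2 (by positivity)
      calc ((k ^ (b+1) : ℕ) : ℝ) = (k : ℝ) ^ (0 + (b+1)) * 1 := by push_cast; ring
        _ ≤ (k : ℝ) ^ (0 + (b+1)) * Real.exp (((b:ℝ)+1) / (4 * k) - 7 * 0 / 32) :=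
            mul_le_mul_of_nonneg_left h1 (by positivity)
        _ = _ := by push_cast; ring_nf
    | m + 1 =>
      rw [subseqCnt_rec]
      have hkc : ((k - 1 : ℕ) : ℝ) = (k : ℝ) - 1 := by
        rw [Nat.cast_sub hk, Nat.cast_one]
      push_cast [hkc]
      set E : ℝ := Real.exp ((b : ℝ) / (4 * k) - 7 * ((m : ℝ) + 1) / 32) with hE
      have hEpos : 0 < E := Real.exp_pos _
      have hsplit1 : Real.exp ((b : ℝ) / (4 * k) - 7 * m / 32) = Real.exp (7/32) * E := by
        rw [hE, ← Real.exp_add]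
        congr 1
        ring
      have hsplit2 : Real.exp (((b : ℝ) + 1) / (4 * k) - 7 * ((m : ℝ) + 1) / 32) =
          Real.exp (1 / (4 * k)) * E := by
        rw [hE, ← Real.exp_add]
        congr 1
        field_simp
        ring
      have ih1 := ih m
      have ih2 := ih (m + 1)
      push_cast at ih1 ih2
      have hk1 : (0 : ℝ) ≤ (k : ℝ) - 1 := by
        have : (1 : ℝ) ≤ k := by exact_mod_cast hk
        linarith
      calc (k : ℝ) * (subseqCnt k m b : ℝ) + ((k : ℝ) - 1) * (subseqCnt k (m+1) b : ℝ)
          ≤ (k : ℝ) * ((k : ℝ) ^ (m + b) * Real.exp ((b : ℝ) / (4 * k) - 7 * m / 32))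
            + ((k : ℝ) - 1) * ((k : ℝ) ^ (m + 1 + b) *
                Real.exp ((b : ℝ) / (4 * k) - 7 * ((m : ℝ) + 1) / 32)) := by
            have t1 := mul_le_mul_of_nonneg_left ih1 hk0.le
            have t2 := mul_le_mul_of_nonneg_left ih2 hk1
            exact add_le_add t1 t2
        _ = (k : ℝ) ^ (m + b + 1) * E * (Real.exp (7/32) + ((k : ℝ) - 1)) := by
            rw [hsplit1]
            rw [show (m + 1 + b) = (m + b) + 1 by ring]
            rw [pow_succ]
            ring
        _ ≤ (k : ℝ) ^ (m + b + 1) * E * ((k : ℝ) * Real.exp (1 / (4 * k))) := by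
            apply mul_le_mul_of_nonneg_left (key_ineq k hk) (by positivity)
        _ = (k : ℝ) ^ (m + 1 + (b + 1)) *
              Real.exp (((b : ℝ) + 1) / (4 * k) - 7 * ((m : ℝ) + 1) / 32) := by
            rw [hsplit2]
            rw [show (m + 1 + (b + 1)) = (m + b + 1) + 1 by ring]
            rw [pow_succ]
            ring

/-- If `A` is a uniformly random word of length `m` over an alphabet of size `k` and
`B` is an independent uniformly random word of length `b` over the same alphabet, then
`Pr[A is a subsequence of B] ≤ exp((b - (7/8)·k·m)/(4k))`. -/
theorem prob_sublist_le (k m b : ℕ) (hk : 1 ≤ k) :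
    unifPr (fun p : (Fin m → Fin k) × (Fin b → Fin k) =>
        (List.ofFn p.1).Sublist (List.ofFn p.2)) ≤
      Real.exp (((b : ℝ) - 7 / 8 * k * m) / (4 * k)) := by
  have hk0 : (0 : ℝ) < k := by exact_mod_cast hk
  have hcard : (Fintype.card ((Fin m → Fin k) × (Fin b → Fin k)) : ℝ) = (k : ℝ) ^ (m + b) := by
    simp [Fintype.card_prod, pow_add]
  have harg : ((b : ℝ) - 7 / 8 * k * m) / (4 * k) = (b : ℝ) / (4 * k) - 7 * m / 32 := by
    field_simp
    ring
  rw [unifPr, hcard, harg]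
  rw [div_le_iff₀ (by positivity)]
  have h := subseqCnt_le k hk b m
  unfold subseqCnt at h
  rw [mul_comm]
  convert h using 4
  rfl
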